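/- Let α > 1, let k ≥ 2, and let C_1,…,C_k be a clustering of a finite set X ⊆ ℝ^d into nonempty clusters with means μ_1,…,μ_k, satisfying α-center proximity. Then max_{i,j ∈ [k]} ‖μ_i − μ_j‖ ≤ diam(X) and diam(X) ≤ ((α + 1)/(α − 1))·max_{i,j ∈ [k]} ‖μ_i − μ_j‖. -/

import Mathlib

/-- For an α-center-proximal clustering of a finite set `X` into `k ≥ 2` nonempty clusters with
means `μ i`, the largest distance between means is at most `diam X`, and
`diam X ≤ ((α + 1)/(α − 1)) · max_{i,j} ‖μ i − μ j‖`. -/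
theorem center_proximity_diam_vs_mean_distances
    (d k : ℕ) (hk : 2 ≤ k) (α : ℝ) (hα : 1 < α)
    (X : Finset (EuclideanSpace ℝ (Fin d)))
    (C : Fin k → Finset (EuclideanSpace ℝ (Fin d)))
    (hne : ∀ i, (C i).Nonempty)
    (hdisj : ∀ i j, i ≠ j → Disjoint (C i) (C j))
    (hcover : ∀ x, x ∈ X ↔ ∃ i, x ∈ C i)
    (μ : Fin k → EuclideanSpace ℝ (Fin d))
    (hμ : ∀ i, μ i = ((C i).card : ℝ)⁻¹ • ∑ x ∈ C i, x)
    (hprox : ∀ i j, i ≠ j → ∀ x ∈ C i, α * ‖x - μ i‖ < ‖x - μ j‖) :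
    (∀ i j, ‖μ i - μ j‖ ≤ Metric.diam (X : Set (EuclideanSpace ℝ (Fin d)))) ∧
    Metric.diam (X : Set (EuclideanSpace ℝ (Fin d))) ≤
      ((α + 1) / (α - 1)) * ⨆ i, ⨆ j, ‖μ i - μ j‖ := by
  classical
  haveI : Nonempty (Fin k) := ⟨⟨0, by omega⟩⟩
  have hXmem : ∀ i, ∀ x ∈ C i, x ∈ X := fun i x hx => (hcover x).2 ⟨i, hx⟩
  -- means are in the convex hull of X
  have hμmem : ∀ i, μ i ∈ convexHull ℝ (X : Set (EuclideanSpace ℝ (Fin d))) := by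
    intro i
    have h := Finset.centerMass_mem_convexHull (C i) (w := fun _ => (1 : ℝ))
      (fun _ _ => zero_le_one)
      (by
        simp only [Finset.sum_const, nsmul_eq_mul, mul_one]
        exact_mod_cast (hne i).card_pos)
      (fun x hx => hXmem i x hx) (z := id)
    rw [hμ i]
    simpa [Finset.centerMass, Finset.sum_const, nsmul_eq_mul] using h
  have part1 : ∀ i j, ‖μ i - μ j‖ ≤ Metric.diam (X : Set (EuclideanSpace ℝ (Fin d))) := by
    intro i j
    have hb : Bornology.IsBounded (convexHull ℝ (X : Set (EuclideanSpace ℝ (Fin d)))) :=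
      isBounded_convexHull.2 X.finite_toSet.isBounded
    have := Metric.dist_le_diam_of_mem hb (hμmem i) (hμmem j)
    rwa [convexHull_diam, dist_eq_norm] at this
  refine ⟨part1, ?_⟩
  set M := ⨆ i, ⨆ j, ‖μ i - μ j‖ with hM
  have hbdd : ∀ i j, ‖μ i - μ j‖ ≤ M := by
    intro i j
    have h1 : ‖μ i - μ j‖ ≤ ⨆ j, ‖μ i - μ j‖ :=
      le_ciSup (f := fun j => ‖μ i - μ j‖) (Set.Finite.bddAbove (Set.finite_range _)) j
    exact h1.trans (le_ciSup (Set.Finite.bddAbove (Set.finite_range _))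
      (f := fun i => ⨆ j, ‖μ i - μ j‖) i)
  have hM0 : 0 ≤ M := by
    have := hbdd (Classical.arbitrary _) (Classical.arbitrary _)
    simpa using (norm_nonneg _).trans this
  have hα1 : (0 : ℝ) < α - 1 := by linarith
  have hxμ : ∀ i, ∀ x ∈ C i, ‖x - μ i‖ ≤ M / (α - 1) := by
    intro i x hx
    obtain ⟨j, hj⟩ := Fintype.exists_ne_of_one_lt_card (by rw [Fintype.card_fin]; omega) i
    have h1 := hprox i j (Ne.symm hj) x hx
    have h2 : ‖x - μ j‖ ≤ ‖x - μ i‖ + ‖μ i - μ j‖ := by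
      have := norm_add_le (x - μ i) (μ i - μ j)
      simpa using this
    have h3 : (α - 1) * ‖x - μ i‖ ≤ M := by
      have := hbdd i j
      nlinarith
    rw [le_div_iff₀ hα1]
    linarith [h3]
  apply Metric.diam_le_of_forall_dist_le
    (by positivity)
  intro x hx y hy
  obtain ⟨i, hxi⟩ := (hcover x).1 hx
  obtain ⟨j, hyj⟩ := (hcover y).1 hy
  have h1 : dist x y ≤ ‖x - μ i‖ + ‖μ i - μ j‖ + ‖y - μ j‖ := by
    rw [dist_eq_norm]
    have := norm_add₃_le (a := x - μ i) (b := μ i - μ j) (c := μ j - y)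
    simp only [sub_add_sub_cancel] at this
    calc ‖x - y‖ ≤ ‖x - μ i‖ + ‖μ i - μ j‖ + ‖μ j - y‖ := this
      _ = ‖x - μ i‖ + ‖μ i - μ j‖ + ‖y - μ j‖ := by rw [norm_sub_rev (μ j) y]
  have h2 := hxμ i x hxi
  have h3 := hxμ j y hyj
  have h4 := hbdd i j
  have key : M / (α - 1) + M + M / (α - 1) = ((α + 1) / (α - 1)) * M := by
    field_simp
    ring
  linarith
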